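/- Let x(t) ∈ ℝ^n solve ẋ = Ax + Bu(t) (an LTI system with no feedthrough in the output y₁ = Cx), and let f(y₁) = γ₀ + γ₁ y₁ + γ₂ y₁² be a scalar quadratic polynomial of the scalar output y₁ = Cx. Then the lifted state z = (1, x, x ⊗ x) ∈ ℝ^{1+n+n²} satisfies a bilinear system ż = 𝔸z + 𝔹̄ z u with output f(Cx) = ℂ z, where 𝔸 = blkdiag(0, A, A⊗Iₙ + Iₙ⊗A), 𝔹̄ has block subdiagonal entries B and B⊗Iₙ + Iₙ⊗B, and ℂ = [γ₀, γ₁C, γ₂ C^{(2)}] with C^{(2)} = C ⊗ C. -/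
import Mathlib


open Matrix Finset

/-- Kronecker product of `Fin`-indexed real matrices, with flattened index types. -/
def kron {m n p q : ℕ} (A : Matrix (Fin m) (Fin n) ℝ) (B : Matrix (Fin p) (Fin q) ℝ) :
    Matrix (Fin (m * p)) (Fin (n * q)) ℝ :=
  Matrix.reindex finProdFinEquiv finProdFinEquiv (A.kroneckerMap (· * ·) B)

/-- Cast a matrix along equalities of its `Fin` dimensions. -/
def mcast {m n m' n' : ℕ} (hm : m = m') (hn : n = n') (A : Matrix (Fin m) (Fin n) ℝ) :
    Matrix (Fin m') (Fin n') ℝ :=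
  Matrix.reindex (finCongr hm) (finCongr hn) A

/-- `k`-th Kronecker power of a matrix, `M^{(0)} = 1` and `M^{(k+1)} = M^{(k)} ⊗ M`. -/
def kronPow {m n : ℕ} : (k : ℕ) → Matrix (Fin m) (Fin n) ℝ → Matrix (Fin (m ^ k)) (Fin (n ^ k)) ℝ
  | 0, _ => mcast rfl rfl (1 : Matrix (Fin 1) (Fin 1) ℝ)
  | k + 1, A => mcast (pow_succ m k).symm (pow_succ n k).symm (kron (kronPow k A) A)

/-- A vector as a column matrix. -/
def cvec {n : ℕ} (x : Fin n → ℝ) : Matrix (Fin n) (Fin 1) ℝ := Matrix.of fun i _ => x i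

/-- The Koopman lifting `Φ(x) = (1, x, x ⊗ x)`. -/
def lift2 {n : ℕ} (x : Fin n → ℝ) : (Unit ⊕ (Fin n ⊕ Fin (n * n))) → ℝ :=
  Sum.elim (fun _ => 1)
    (Sum.elim x (fun j => kron (cvec x) (cvec x) j (finCongr (Nat.mul_one 1).symm 0)))

/-- Lifted state matrix `𝔸 = blkdiag(0, A, A ⊗ Iₙ + Iₙ ⊗ A)`. -/
def liftA {n : ℕ} (A : Matrix (Fin n) (Fin n) ℝ) :
    Matrix (Unit ⊕ (Fin n ⊕ Fin (n * n))) (Unit ⊕ (Fin n ⊕ Fin (n * n))) ℝ :=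
  Matrix.fromBlocks 0 0 0
    (Matrix.fromBlocks A 0 0
      (kron A (1 : Matrix (Fin n) (Fin n) ℝ) + kron (1 : Matrix (Fin n) (Fin n) ℝ) A))

/-- Lifted bilinear input matrix `𝔹̄`, with block subdiagonal `B` and `B ⊗ Iₙ + Iₙ ⊗ B`. -/
def liftB {n : ℕ} (B : Fin n → ℝ) :
    Matrix (Unit ⊕ (Fin n ⊕ Fin (n * n))) (Unit ⊕ (Fin n ⊕ Fin (n * n))) ℝ :=
  Matrix.fromBlocks 0 0
    (Matrix.of fun r (_ : Unit) => Sum.elim B (fun _ => 0) r)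
    (Matrix.fromBlocks 0 0
      (mcast rfl (Nat.one_mul n) (kron (cvec B) (1 : Matrix (Fin n) (Fin n) ℝ))
        + mcast rfl (Nat.mul_one n) (kron (1 : Matrix (Fin n) (Fin n) ℝ) (cvec B))) 0)

/-- Lifted output row `ℂ = [γ₀, γ₁C, γ₂ C ⊗ C]`. -/
def liftC {n : ℕ} (C : Matrix (Fin 1) (Fin n) ℝ) (γ0 γ1 γ2 : ℝ) :
    (Unit ⊕ (Fin n ⊕ Fin (n * n))) → ℝ :=
  Sum.elim (fun _ => γ0)
    (Sum.elim (fun j => γ1 * C 0 j)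
      (fun j => γ2 * kron C C (finCongr (Nat.mul_one 1).symm 0) j))


/-! ### Auxiliary lemmas -/

lemma kron_apply {m n p q : ℕ} (M : Matrix (Fin m) (Fin n) ℝ) (N : Matrix (Fin p) (Fin q) ℝ)
    (i : Fin m) (k : Fin p) (j : Fin n) (l : Fin q) :
    kron M N (finProdFinEquiv (i, k)) (finProdFinEquiv (j, l)) = M i j * N k l := by
  simp [kron, Matrix.kroneckerMap]

lemma sum_fin_mul {m p : ℕ} (f : Fin (m * p) → ℝ) :
    ∑ j, f j = ∑ a : Fin m, ∑ b : Fin p, f (finProdFinEquiv (a, b)) := by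
  rw [← Equiv.sum_comp finProdFinEquiv f, Fintype.sum_prod_type]

lemma one_one_idx :
    (finCongr (Nat.mul_one 1).symm 0 : Fin (1 * 1)) = finProdFinEquiv ((0 : Fin 1), (0 : Fin 1)) := by
  decide

lemma aux1 {n : ℕ} (k : Fin n) :
    (finCongr (Nat.one_mul n).symm k : Fin (1 * n)) = finProdFinEquiv ((0 : Fin 1), k) := by
  apply Fin.ext; simp [finProdFinEquiv]

lemma aux2 {n : ℕ} (k : Fin n) :
    (finCongr (Nat.mul_one n).symm k : Fin (n * 1)) = finProdFinEquiv (k, (0 : Fin 1)) := by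
  apply Fin.ext; simp [finProdFinEquiv]

lemma lift2_sq {n : ℕ} (x : Fin n → ℝ) (a b : Fin n) :
    lift2 x (Sum.inr (Sum.inr (finProdFinEquiv (a, b)))) = x a * x b := by
  simp only [lift2, Sum.elim_inr]
  rw [one_one_idx, kron_apply]; simp [cvec]

lemma kron_row_dot {m p n q : ℕ} (M : Matrix (Fin m) (Fin n) ℝ) (N : Matrix (Fin p) (Fin q) ℝ)
    (a : Fin m) (b : Fin p) (v : Fin (n * q) → ℝ) :
    ∑ c, kron M N (finProdFinEquiv (a, b)) c * v c
      = ∑ j, ∑ l, M a j * N b l * v (finProdFinEquiv (j, l)) := by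
  rw [sum_fin_mul (fun c => kron M N (finProdFinEquiv (a, b)) c * v c)]
  simp [kron_apply]

/-- An LTI system with no feedthrough composed with a quadratic static output
nonlinearity admits an exact bilinear Koopman realization on the lifting `(1, x, x ⊗ x)`. -/
theorem lti_quadratic_bilinear_koopman {n : ℕ}
    (A : Matrix (Fin n) (Fin n) ℝ) (B : Fin n → ℝ) (C : Matrix (Fin 1) (Fin n) ℝ)
    (γ0 γ1 γ2 : ℝ) (u : ℝ → ℝ) (hu : Continuous u) (x : ℝ → Fin n → ℝ)
    (hx : ∀ t, HasDerivAt x (A.mulVec (x t) + u t • B) t) :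
    (∀ t, HasDerivAt (fun s => lift2 (x s))
        ((liftA A).mulVec (lift2 (x t)) + u t • (liftB B).mulVec (lift2 (x t))) t)
    ∧ ∀ t, γ0 + γ1 * (C * cvec (x t)) 0 0 + γ2 * ((C * cvec (x t)) 0 0) ^ 2
        = liftC C γ0 γ1 γ2 ⬝ᵥ lift2 (x t) := by
  constructor
  · intro t
    have hdc : ∀ i, HasDerivAt (fun s => x s i) ((A.mulVec (x t) + u t • B) i) t :=
      fun i => hasDerivAt_pi.1 (hx t) i
    rw [hasDerivAt_pi]
    rintro (⟨⟩ | i | j)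
    · have hv0 : ((liftA A).mulVec (lift2 (x t)) + u t • (liftB B).mulVec (lift2 (x t)))
          (Sum.inl ()) = 0 := by
        simp [liftA, liftB, Matrix.mulVec, dotProduct, Fintype.sum_sum_type]
      rw [hv0]
      exact hasDerivAt_const t 1
    · have hv1 : ((liftA A).mulVec (lift2 (x t)) + u t • (liftB B).mulVec (lift2 (x t)))
          (Sum.inr (Sum.inl i)) = (A.mulVec (x t) + u t • B) i := by
        simp [liftA, liftB, Matrix.mulVec, dotProduct, Fintype.sum_sum_type, lift2]
      rw [hv1]
      exact hdc i
    · obtain ⟨⟨a, b⟩, rfl⟩ := finProdFinEquiv.surjective j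
      have hA2 : ((liftA A).mulVec (lift2 (x t))) (Sum.inr (Sum.inr (finProdFinEquiv (a, b))))
          = (A.mulVec (x t)) a * x t b + x t a * (A.mulVec (x t)) b := by
        simp only [liftA, Matrix.mulVec, dotProduct, Fintype.sum_sum_type,
          Matrix.fromBlocks_apply₂₂, Matrix.fromBlocks_apply₂₁, Matrix.zero_apply, zero_mul,
          Finset.sum_const_zero, add_zero, zero_add, Matrix.add_apply, add_mul,
          Finset.sum_add_distrib, Finset.univ_unique, Finset.sum_singleton]
        rw [kron_row_dot, kron_row_dot]
        simp only [lift2_sq, Matrix.one_apply, ite_mul, mul_ite, one_mul, zero_mul, mul_zero,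
          Finset.sum_ite_eq, Finset.sum_ite_eq', Finset.mem_univ, if_true]
        simp [Matrix.mulVec, dotProduct, Finset.sum_mul, Finset.mul_sum]
        congr 1 <;> (apply Finset.sum_congr rfl; intro c _; ring)
      have hB2 : ((liftB B).mulVec (lift2 (x t))) (Sum.inr (Sum.inr (finProdFinEquiv (a, b))))
          = B a * x t b + x t a * B b := by
        simp only [liftB, Matrix.mulVec, dotProduct, Fintype.sum_sum_type,
          Matrix.fromBlocks_apply₂₂, Matrix.fromBlocks_apply₂₁, Matrix.zero_apply, zero_mul,
          Finset.sum_const_zero, add_zero, zero_add, Matrix.add_apply, add_mul,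
          Finset.sum_add_distrib, Finset.univ_unique, Finset.sum_singleton, Matrix.of_apply,
          Sum.elim_inr, mcast, Matrix.reindex_apply, Matrix.submatrix_apply, finCongr_refl,
          Equiv.refl_symm, Equiv.refl_apply, finCongr_symm, aux1, aux2, kron_apply]
        simp [lift2, Matrix.one_apply, cvec, ite_mul, mul_ite, Finset.sum_ite_eq,
          Finset.sum_ite_eq']
        ring
      have hfun : (fun s => lift2 (x s) (Sum.inr (Sum.inr (finProdFinEquiv (a, b)))))
          = fun s => x s a * x s b := by
        funext s; exact lift2_sq (x s) a b
      rw [show ((liftA A).mulVec (lift2 (x t)) + u t • (liftB B).mulVec (lift2 (x t)))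
          (Sum.inr (Sum.inr (finProdFinEquiv (a, b))))
          = ((A.mulVec (x t) + u t • B) a) * x t b + x t a * ((A.mulVec (x t) + u t • B) b) by
        simp only [Pi.add_apply, Pi.smul_apply, smul_eq_mul, hA2, hB2]; ring]
      rw [hfun]
      exact (hdc a).mul (hdc b)
  · intro t
    have hS : (C * cvec (x t)) 0 0 = ∑ j, C 0 j * x t j := by
      simp [Matrix.mul_apply, cvec]
    rw [hS, dotProduct, Fintype.sum_sum_type, Fintype.sum_sum_type]
    simp only [liftC, Sum.elim_inl, Sum.elim_inr]
    rw [sum_fin_mul (fun j => (γ2 * kron C C (finCongr (Nat.mul_one 1).symm 0) j)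
      * lift2 (x t) (Sum.inr (Sum.inr j)))]
    simp only [one_one_idx, kron_apply, lift2_sq]
    simp only [lift2, Sum.elim_inl, Sum.elim_inr, mul_one]
    rw [sq, Finset.sum_mul_sum]
    simp only [Finset.mul_sum]
    rw [add_assoc]
    congr 1
    · simp
    congr 1
    · apply Finset.sum_congr rfl; intro a _; ring
    · apply Finset.sum_congr rfl; intro a _; apply Finset.sum_congr rfl; intro b _; ring
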